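/- The group ℤ/2n *_{ℤ/n} ℤ/2n, amalgamated over the index-2 subgroup ℤ/n in each factor, is isomorphic to ℤ/n × D∞ when n is odd. -/

import Mathlib

/-- The natural inclusion `ℤ/n ↪ ℤ/2n`, sending `1` to `2`. -/
def zmodIncl (n : ℕ) : ZMod n →+ ZMod (2 * n) :=
  ZMod.lift n ⟨(zmultiplesHom (ZMod (2 * n))) (2 : ZMod (2 * n)), by
    have h : ((2 * n : ℕ) : ZMod (2 * n)) = 0 := ZMod.natCast_self _
    simp only [zmultiplesHom_apply]
    rw [zsmul_eq_mul]
    push_cast at h ⊢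
    linear_combination h⟩

/-- The two inclusions `ℤ/n ↪ ℤ/2n` (written multiplicatively) used to form the
amalgamated product `ℤ/2n *_{ℤ/n} ℤ/2n`. -/
def amalgMaps (n : ℕ) : ∀ _ : Bool,
    Multiplicative (ZMod n) →* Multiplicative (ZMod (2 * n)) :=
  fun _ => AddMonoidHom.toMultiplicative (zmodIncl n)

/-- Lift an element of order dividing `k` to a hom out of `Multiplicative (ZMod k)`. -/
def liftZMod {M : Type*} [Group M] (k : ℕ) (g : M) (h : g ^ (k : ℤ) = 1) :
    Multiplicative (ZMod k) →* M :=
  AddMonoidHom.toMultiplicativeLeft (ZMod.lift k ⟨(zmultiplesHom (Additive M)) (Additive.ofMul g), by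
    simp only [zmultiplesHom_apply]; exact congrArg Additive.ofMul h⟩)

lemma liftZMod_intCast {M : Type*} [Group M] (k : ℕ) (g : M) (h : g ^ (k : ℤ) = 1) (i : ℤ) :
    liftZMod k g h (Multiplicative.ofAdd ((i : ℤ) : ZMod k)) = g ^ i := by
  simp [liftZMod, ZMod.lift_coe, zmultiplesHom_apply]

lemma liftZMod_ofAdd_one {M : Type*} [Group M] (k : ℕ) (g : M) (h : g ^ (k : ℤ) = 1) :
    liftZMod k g h (Multiplicative.ofAdd (1 : ZMod k)) = g := by
  have h1 : (1 : ZMod k) = ((1 : ℤ) : ZMod k) := by norm_cast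
  rw [h1, liftZMod_intCast, zpow_one]

lemma hom_comm_apply {M N : Type*} [CommMonoid M] [Monoid N] (F : M →* N) (a b : M) :
    F a * F b = F b * F a := by rw [← map_mul, ← map_mul, mul_comm]

lemma multHom_ext {k : ℕ} {M : Type*} [Group M] {f g : Multiplicative (ZMod k) →* M}
    (h : f (Multiplicative.ofAdd 1) = g (Multiplicative.ofAdd 1)) : f = g := by
  refine MonoidHom.ext fun x => ?_
  obtain ⟨i, hi⟩ := ZMod.intCast_surjective (Multiplicative.toAdd x)
  have hx : x = (Multiplicative.ofAdd (1 : ZMod k)) ^ i := by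
    rw [← ofAdd_zsmul, zsmul_eq_mul, mul_one, hi]; rfl
  rw [hx, map_zpow, map_zpow, h]

lemma r_one_zpow (i : ℤ) : (DihedralGroup.r 1 : DihedralGroup 0) ^ i = DihedralGroup.r i := by
  induction i using Int.induction_on with
  | zero => rfl
  | succ k ih => rw [zpow_add, ih, zpow_one]; exact DihedralGroup.r_mul_r _ _
  | pred k ih =>
    rw [zpow_sub, ih, zpow_one, mul_inv_eq_iff_eq_mul]
    exact ((DihedralGroup.r_mul_r _ _).trans (congrArg DihedralGroup.r (show (-(k : ℤ) - 1 + 1) = -(k : ℤ) by ring))).symm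

/-- `ZMod 0` is definitionally `ℤ`. -/
def zi (i : ZMod 0) : ℤ := i

lemma r_zi_zpow (R : DihedralGroup 0) (h : R = DihedralGroup.r 1) (i : ZMod 0) :
    R ^ zi i = DihedralGroup.r i := by rw [h]; exact r_one_zpow (zi i)

lemma sr_zero_inv : (DihedralGroup.sr (0 : ZMod 0))⁻¹ = DihedralGroup.sr 0 :=
  inv_eq_of_mul_eq_one_right (by rw [DihedralGroup.sr_mul_sr, sub_self]; rfl)

lemma zmodIncl_one (n : ℕ) : zmodIncl n (1 : ZMod n) = ((2 : ℤ) : ZMod (2 * n)) := by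
  have h1 : (1 : ZMod n) = ((1 : ℤ) : ZMod n) := by norm_cast
  rw [h1, zmodIncl, ZMod.lift_coe]
  simp [zmultiplesHom_apply]

set_option maxHeartbeats 1000000 in
/-- For `n` odd, the amalgamated product `ℤ/2n *_{ℤ/n} ℤ/2n` (amalgamated over the
index-2 subgroup `ℤ/n` of each factor) is isomorphic to `ℤ/n × D∞`, where
`D∞ = DihedralGroup 0` is the infinite dihedral group. -/
theorem amalgam_iso_zmod_times_dihedral (n : ℕ) (hpos : 0 < n) (hodd : Odd n) :
    Nonempty (Monoid.PushoutI (amalgMaps n) ≃*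
      Multiplicative (ZMod n) × DihedralGroup 0) := by
  classical
  obtain ⟨m, hm⟩ := hodd
  set T := Multiplicative (ZMod n) × DihedralGroup 0 with hT
  set c : ZMod n := ((m + 1 : ℕ) : ZMod n) with hc
  have hn0 : ((n : ℕ) : ZMod n) = 0 := ZMod.natCast_self n
  have h2c : c + c = 1 := by
    have hn : ((2 * m + 1 : ℕ) : ZMod n) = 0 := by rw [← hm]; exact ZMod.natCast_self n
    rw [hc]
    push_cast at hn ⊢
    linear_combination hn
  -- generators of the target
  set gT : Bool → T := fun b =>
    (Multiplicative.ofAdd c, DihedralGroup.sr (if b then 0 else 1)) with hgTdef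
  have hsr2 : ∀ j : ZMod 0, DihedralGroup.sr j * DihedralGroup.sr j = 1 := by
    intro j; rw [DihedralGroup.sr_mul_sr, sub_self]; rfl
  have hgT : ∀ b, gT b ^ ((2 * n : ℕ) : ℤ) = 1 := by
    intro b
    have h1 : (Multiplicative.ofAdd c) ^ ((2 * n : ℕ) : ℤ) = 1 := by
      rw [← ofAdd_zsmul, zsmul_eq_mul]
      have : (((2 * n : ℕ) : ℤ) : ZMod n) = 0 := by push_cast [hn0]; ring
      rw [this, zero_mul]; rfl
    have h2 : (DihedralGroup.sr (if b then 0 else 1) : DihedralGroup 0) ^ ((2 * n : ℕ) : ℤ) = 1 := by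
      rw [zpow_natCast, pow_mul]
      have h2' : (DihedralGroup.sr (if b then 0 else 1) : DihedralGroup 0) ^ 2 = 1 := by
        rw [sq]; exact hsr2 _
      rw [h2', one_pow]
    exact Prod.ext h1 h2
  set f : ∀ _ : Bool, Multiplicative (ZMod (2 * n)) →* T :=
    fun b => liftZMod (2 * n) (gT b) (hgT b) with hfdef
  have hk1 : ((Multiplicative.ofAdd (1 : ZMod n), 1) : T) ^ ((n : ℕ) : ℤ) = 1 := by
    refine Prod.ext ?_ (one_zpow _)
    show (Multiplicative.ofAdd (1 : ZMod n)) ^ ((n : ℕ) : ℤ) = 1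
    rw [← ofAdd_zsmul, zsmul_eq_mul, mul_one]
    have : (((n : ℕ) : ℤ) : ZMod n) = 0 := by push_cast [hn0]; ring
    rw [this]; rfl
  set k : Multiplicative (ZMod n) →* T :=
    liftZMod n (Multiplicative.ofAdd (1 : ZMod n), 1) hk1 with hkdef
  have hkone : k (Multiplicative.ofAdd (1 : ZMod n)) = (Multiplicative.ofAdd (1 : ZMod n), 1) :=
    liftZMod_ofAdd_one _ _ _
  have hfb : ∀ b, f b (Multiplicative.ofAdd (1 : ZMod (2 * n))) = gT b := fun b =>
    liftZMod_ofAdd_one _ _ _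
  have hamalg : ∀ b, amalgMaps n b (Multiplicative.ofAdd (1 : ZMod n)) =
      Multiplicative.ofAdd ((2 : ℤ) : ZMod (2 * n)) := by
    intro b
    show Multiplicative.ofAdd (zmodIncl n (1 : ZMod n)) = _
    rw [zmodIncl_one]
  have hf : ∀ b, (f b).comp (amalgMaps n b) = k := by
    intro b
    apply multHom_ext
    rw [MonoidHom.comp_apply, hamalg, hfdef, liftZMod_intCast, hkone]
    refine Prod.ext ?_ ?_
    · show (Multiplicative.ofAdd c) ^ (2 : ℤ) = Multiplicative.ofAdd (1 : ZMod n)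
      rw [← ofAdd_zsmul, zsmul_eq_mul]
      norm_num
      rw [two_mul, h2c]
    · show (DihedralGroup.sr (if b then 0 else 1) : DihedralGroup 0) ^ (2 : ℤ) = 1
      rw [zpow_two]; exact hsr2 _
  set φ : Monoid.PushoutI (amalgMaps n) →* T := Monoid.PushoutI.lift f k hf with hφdef
  -- generators of the pushout
  set A : Monoid.PushoutI (amalgMaps n) :=
    Monoid.PushoutI.of (φ := amalgMaps n) true (Multiplicative.ofAdd 1) with hA
  set B : Monoid.PushoutI (amalgMaps n) :=
    Monoid.PushoutI.of (φ := amalgMaps n) false (Multiplicative.ofAdd 1) with hB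
  set ζ : Multiplicative (ZMod n) →* Monoid.PushoutI (amalgMaps n) :=
    (Monoid.PushoutI.of (φ := amalgMaps n) true).comp (amalgMaps n true) with hζdef
  have hζfalse : ∀ x, ζ x = Monoid.PushoutI.of (φ := amalgMaps n) false (amalgMaps n false x) := by
    intro x
    rw [hζdef, MonoidHom.comp_apply, Monoid.PushoutI.of_apply_eq_base,
      Monoid.PushoutI.of_apply_eq_base]
  have hcen : ∀ (g : Monoid.PushoutI (amalgMaps n)) (x), g * ζ x = ζ x * g := by
    intro g x
    induction g using Monoid.PushoutI.induction_on with
    | of i u =>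
      cases i with
      | true =>
        rw [hζdef, MonoidHom.comp_apply]
        exact hom_comm_apply (Monoid.PushoutI.of (φ := amalgMaps n) true) u _
      | false =>
        rw [hζfalse]
        exact hom_comm_apply (Monoid.PushoutI.of (φ := amalgMaps n) false) u _
    | base h =>
      rw [← Monoid.PushoutI.of_apply_eq_base (amalgMaps n) true, hζdef, MonoidHom.comp_apply]
      exact hom_comm_apply (Monoid.PushoutI.of (φ := amalgMaps n) true) _ _
    | mul a b ha hb =>
      rw [mul_assoc, hb, ← mul_assoc, ha, mul_assoc]
  have hζmul : ∀ u v : ZMod n, ζ (Multiplicative.ofAdd u) * ζ (Multiplicative.ofAdd v) =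
      ζ (Multiplicative.ofAdd (u + v)) := by
    intro u v; rw [← map_mul]; rfl
  have hAA : A * A = ζ (Multiplicative.ofAdd 1) := by
    rw [hA, hζdef, MonoidHom.comp_apply, ← map_mul]
    congr 1
    rw [hamalg]
    show Multiplicative.ofAdd ((1 : ZMod (2*n)) + 1) = _
    congr 1
    norm_cast
  have hBB : B * B = ζ (Multiplicative.ofAdd 1) := by
    rw [hB, hζfalse, ← map_mul]
    congr 1
    rw [hamalg]
    show Multiplicative.ofAdd ((1 : ZMod (2*n)) + 1) = _
    congr 1
    norm_cast
  set S : Monoid.PushoutI (amalgMaps n) := A * ζ (Multiplicative.ofAdd (-c)) with hS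
  set R : Monoid.PushoutI (amalgMaps n) := A⁻¹ * B with hR
  have hζ0 : ζ (Multiplicative.ofAdd (0 : ZMod n)) = 1 := map_one ζ
  have hS2 : S * S = 1 := by
    rw [hS, mul_assoc, ← mul_assoc (ζ _) A, ← hcen, mul_assoc A, hζmul, ← mul_assoc, hAA,
      hζmul]
    rw [show (1 : ZMod n) + (-c + -c) = 0 by linear_combination -h2c]
    exact hζ0
  have hSR1 : S * R = R⁻¹ * S := by
    have lhs : S * R = ζ (Multiplicative.ofAdd (-c)) * B :=
      calc S * R = ζ (Multiplicative.ofAdd (-c)) * A * (A⁻¹ * B) := by rw [hS, hR, hcen A]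
        _ = ζ (Multiplicative.ofAdd (-c)) * (A * (A⁻¹ * B)) := by rw [mul_assoc]
        _ = ζ (Multiplicative.ofAdd (-c)) * B := by rw [← mul_assoc A, mul_inv_cancel, one_mul]
    have rhs : R⁻¹ * S = ζ (Multiplicative.ofAdd (-c)) * B :=
      calc R⁻¹ * S = B⁻¹ * A * (A * ζ (Multiplicative.ofAdd (-c))) := by
            rw [hR, mul_inv_rev, inv_inv, hS]
        _ = B⁻¹ * (A * A * ζ (Multiplicative.ofAdd (-c))) := by
            rw [mul_assoc, ← mul_assoc A]
        _ = B⁻¹ * (B * B * ζ (Multiplicative.ofAdd (-c))) := by rw [hAA, ← hBB]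
        _ = B * ζ (Multiplicative.ofAdd (-c)) := by
            rw [mul_assoc B, ← mul_assoc, inv_mul_cancel, one_mul]
        _ = ζ (Multiplicative.ofAdd (-c)) * B := hcen B _
    rw [lhs, rhs]
  have hSRz : ∀ i : ℤ, S * R ^ i = R ^ (-i) * S := by
    intro i
    have h : S * R * S⁻¹ = R⁻¹ := by rw [hSR1, mul_assoc, mul_inv_cancel, mul_one]
    have h2 : S * R ^ i * S⁻¹ = R ^ (-i) := by
      have hconj := map_zpow (MulAut.conj S) R i
      simp only [MulAut.conj_apply] at hconj
      rw [hconj, h, inv_zpow, zpow_neg]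
    rw [← h2, mul_assoc (S * R ^ i) S⁻¹ S, inv_mul_cancel, mul_one]
  have hRS : ∀ i : ℤ, R ^ i * S = S * R ^ (-i) := by
    intro i
    have h := hSRz (-i)
    rw [neg_neg] at h
    exact h.symm
  set ψ₂ : DihedralGroup 0 → Monoid.PushoutI (amalgMaps n) := fun d =>
    match d with
    | DihedralGroup.r i => R ^ zi i
    | DihedralGroup.sr i => S * R ^ zi i with hψ₂def
  have hψ₂mul : ∀ d₁ d₂, ψ₂ (d₁ * d₂) = ψ₂ d₁ * ψ₂ d₂ := by
    rintro (i | i) (j | j)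
    · show R ^ zi (i + j) = R ^ zi i * R ^ zi j
      rw [show zi (i + j) = zi i + zi j from rfl, zpow_add]
    · show S * R ^ zi (j - i) = R ^ zi i * (S * R ^ zi j)
      have he : zi (j - i) = -zi i + zi j := by
        rw [show zi (j - i) = zi j - zi i from rfl]; ring
      rw [he, ← mul_assoc (R ^ zi i) S (R ^ zi j), hRS (zi i), mul_assoc S, ← zpow_add]
    · show S * R ^ zi (i + j) = S * R ^ zi i * R ^ zi j
      rw [mul_assoc S, ← zpow_add]
      rfl
    · show R ^ zi (j - i) = (S * R ^ zi i) * (S * R ^ zi j)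
      have he : zi (j - i) = -zi i + zi j := by
        rw [show zi (j - i) = zi j - zi i from rfl]; ring
      rw [he, mul_assoc S, ← mul_assoc (R ^ zi i), hRS (zi i), ← mul_assoc S (S * R ^ (-zi i)),
        ← mul_assoc S S, hS2, one_mul, ← zpow_add]
  set ψ : T →* Monoid.PushoutI (amalgMaps n) :=
    MonoidHom.mk' (fun p => ζ p.1 * ψ₂ p.2) (by
      rintro ⟨x₁, d₁⟩ ⟨x₂, d₂⟩
      show ζ (x₁ * x₂) * ψ₂ (d₁ * d₂) = (ζ x₁ * ψ₂ d₁) * (ζ x₂ * ψ₂ d₂)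
      rw [map_mul, hψ₂mul, mul_assoc (ζ x₁) (ζ x₂), ← mul_assoc (ζ x₂), ← hcen (ψ₂ d₁) x₂,
        mul_assoc (ψ₂ d₁), ← mul_assoc (ζ x₁) (ψ₂ d₁)]) with hψdef
  have hψ_apply : ∀ x d, ψ (x, d) = ζ x * ψ₂ d := fun _ _ => rfl
  -- ψ ∘ φ = id
  have hψφ : ψ.comp φ = MonoidHom.id _ := by
    apply Monoid.PushoutI.hom_ext_nonempty
    intro b
    apply multHom_ext
    rw [MonoidHom.comp_apply, MonoidHom.comp_apply, MonoidHom.comp_apply, hφdef,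
      Monoid.PushoutI.lift_of, hfb, MonoidHom.id_apply]
    cases b with
    | true =>
      show ζ (Multiplicative.ofAdd c) * ψ₂ (DihedralGroup.sr 0) = A
      show ζ (Multiplicative.ofAdd c) * (S * R ^ zi 0) = A
      rw [show zi 0 = 0 from rfl, zpow_zero, mul_one, hS, ← hcen, mul_assoc, hζmul,
        show (-c) + c = 0 by ring, hζ0, mul_one]
    | false =>
      show ζ (Multiplicative.ofAdd c) * (S * R ^ zi 1) = B
      rw [show zi 1 = 1 from rfl, zpow_one, hS, hR, ← mul_assoc, ← hcen,
        mul_assoc A, hζmul, show (-c) + c = 0 by ring, hζ0, mul_one]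
      rw [← mul_assoc, mul_inv_cancel, one_mul]
  -- φ ∘ ψ = id
  have hkx : ∀ x, k x = (x, 1) := by
    have hinl : k = MonoidHom.inl (Multiplicative (ZMod n)) (DihedralGroup 0) := by
      apply multHom_ext; rw [hkone]; rfl
    intro x; rw [hinl]; rfl
  have hφζ : ∀ x, φ (ζ x) = (x, 1) := by
    intro x
    rw [hζdef, MonoidHom.comp_apply, hφdef, Monoid.PushoutI.lift_of,
      ← MonoidHom.comp_apply, hf, hkx]
  have hφA : φ A = gT true := by rw [hA, hφdef, Monoid.PushoutI.lift_of, hfb]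
  have hφB : φ B = gT false := by rw [hB, hφdef, Monoid.PushoutI.lift_of, hfb]
  have hφR : φ R = (1, DihedralGroup.r 1) := by
    rw [hR, map_mul, map_inv, hφA, hφB, hgTdef]
    show ((Multiplicative.ofAdd c, DihedralGroup.sr 0) : T)⁻¹ *
      (Multiplicative.ofAdd c, DihedralGroup.sr 1) = (1, DihedralGroup.r 1)
    rw [Prod.inv_mk, sr_zero_inv, Prod.mk_mul_mk, DihedralGroup.sr_mul_sr]
    refine Prod.ext ?_ ?_
    · show (Multiplicative.ofAdd c)⁻¹ * Multiplicative.ofAdd c = 1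
      rw [inv_mul_cancel]
    · show DihedralGroup.r (1 - 0) = DihedralGroup.r 1
      rw [sub_zero]
  have hφS : φ S = (1, DihedralGroup.sr 0) := by
    rw [hS, map_mul, hφA, hφζ, hgTdef]
    show ((Multiplicative.ofAdd c, DihedralGroup.sr 0) : T) *
      (Multiplicative.ofAdd (-c), 1) = (1, DihedralGroup.sr 0)
    rw [Prod.mk_mul_mk, mul_one]
    refine Prod.ext ?_ rfl
    show Multiplicative.ofAdd c * Multiplicative.ofAdd (-c) = 1
    rw [← ofAdd_add, add_neg_cancel]; rfl
  have hφψ₂ : ∀ d, φ (ψ₂ d) = (1, d) := by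
    rintro (i | i)
    · show φ (R ^ zi i) = (1, DihedralGroup.r i)
      rw [map_zpow, hφR]
      refine Prod.ext (one_zpow _) ?_
      show (DihedralGroup.r 1 : DihedralGroup 0) ^ zi i = DihedralGroup.r i
      exact r_zi_zpow _ rfl i
    · show φ (S * R ^ zi i) = (1, DihedralGroup.sr i)
      rw [map_mul, map_zpow, hφR, hφS]
      have h1 : ((1, DihedralGroup.r 1) : T) ^ zi i = (1, DihedralGroup.r i) :=
        Prod.ext (one_zpow _) (r_zi_zpow _ rfl i)
      rw [h1, Prod.mk_mul_mk, one_mul, DihedralGroup.sr_mul_r, zero_add]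
  have hφψ : φ.comp ψ = MonoidHom.id _ := by
    apply MonoidHom.ext
    rintro ⟨x, d⟩
    rw [MonoidHom.comp_apply, hψ_apply, map_mul, hφζ, hφψ₂, MonoidHom.id_apply,
      Prod.mk_mul_mk, mul_one, one_mul]
  exact ⟨MonoidHom.toMulEquiv φ ψ hψφ hφψ⟩
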